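/- Implicit Function Theorem for streams: let K be a field of characteristic 0, let E = (E₁,...,Eₙ) be polynomials in the variables x, y₁, ..., yₙ with coefficients in K, and let r₀ ∈ Kⁿ be such that Eᵢ(0, r₀) = 0 for all i and the n × n Jacobian matrix over K with (i,j) entry (∂Eᵢ/∂yⱼ)(0, r₀) is invertible. Then there exists a unique tuple of streams σ = (σ₁,...,σₙ) over K such that σᵢ(0) = r₀ᵢ for all i and Eᵢ(X, σ) = 0 for all i. -/

import Mathlib

/-- Evaluation of a polynomial in `x, y₁, ..., yₙ` (variable `0` playing the role of `x`)
at `x := X` and `yᵢ := σᵢ`. -/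
noncomputable def polyEval {K : Type*} [Field K] {n : ℕ}
    (p : MvPolynomial (Fin (n + 1)) K) (σ : Fin n → PowerSeries K) : PowerSeries K :=
  MvPolynomial.aeval (Fin.cons PowerSeries.X σ) p

section Aux

variable {K : Type*} [Field K] {n : ℕ}

lemma polyEval_congr (p : MvPolynomial (Fin (n + 1)) K) {σ τ : Fin n → PowerSeries K}
    {d : PowerSeries K} (h : ∀ j, d ∣ σ j - τ j) :
    d ∣ polyEval p σ - polyEval p τ := by
  induction p using MvPolynomial.induction_on with
  | C a => simp [polyEval]
  | add p q hp hq =>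
    simp only [polyEval, map_add] at *
    have := dvd_add hp hq
    convert this using 1
    ring
  | mul_X p i hp =>
    have hv : d ∣ (Fin.cons PowerSeries.X σ : Fin (n+1) → PowerSeries K) i -
        (Fin.cons PowerSeries.X τ : Fin (n+1) → PowerSeries K) i := by
      rcases Fin.eq_zero_or_eq_succ i with rfl | ⟨m, rfl⟩
      · simp
      · simpa using h m
    simp only [polyEval, map_mul, MvPolynomial.aeval_X] at *
    have key : MvPolynomial.aeval (Fin.cons PowerSeries.X σ) p *
          (Fin.cons PowerSeries.X σ : Fin (n+1) → PowerSeries K) i -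
        MvPolynomial.aeval (Fin.cons PowerSeries.X τ) p *
          (Fin.cons PowerSeries.X τ : Fin (n+1) → PowerSeries K) i
        = (MvPolynomial.aeval (Fin.cons PowerSeries.X σ) p -
            MvPolynomial.aeval (Fin.cons PowerSeries.X τ) p) *
            (Fin.cons PowerSeries.X σ : Fin (n+1) → PowerSeries K) i
          + MvPolynomial.aeval (Fin.cons PowerSeries.X τ) p *
            ((Fin.cons PowerSeries.X σ : Fin (n+1) → PowerSeries K) i -
              (Fin.cons PowerSeries.X τ : Fin (n+1) → PowerSeries K) i) := by ring
    rw [key]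
    exact dvd_add (hp.mul_right _) (hv.mul_left _)

lemma polyEval_taylor (p : MvPolynomial (Fin (n + 1)) K) {σ τ : Fin n → PowerSeries K}
    {d : PowerSeries K} (h : ∀ j, d ∣ σ j - τ j) :
    d ^ 2 ∣ polyEval p σ - polyEval p τ -
      ∑ j : Fin n, polyEval (MvPolynomial.pderiv j.succ p) τ * (σ j - τ j) := by
  classical
  induction p using MvPolynomial.induction_on with
  | C a => simp [polyEval]
  | add p q hp hq =>
    simp only [polyEval, map_add, add_mul, Finset.sum_add_distrib] at *
    have := dvd_add hp hq
    convert this using 1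
    ring
  | mul_X p i hp =>
    have hv : d ∣ (Fin.cons PowerSeries.X σ : Fin (n+1) → PowerSeries K) i -
        (Fin.cons PowerSeries.X τ : Fin (n+1) → PowerSeries K) i := by
      rcases Fin.eq_zero_or_eq_succ i with rfl | ⟨m, rfl⟩
      · simp
      · simpa using h m
    have hw : ∑ j : Fin n, (if i = Fin.succ j then (1 : PowerSeries K) else 0) * (σ j - τ j)
        = (Fin.cons PowerSeries.X σ : Fin (n+1) → PowerSeries K) i -
          (Fin.cons PowerSeries.X τ : Fin (n+1) → PowerSeries K) i := by
      rcases Fin.eq_zero_or_eq_succ i with rfl | ⟨m, rfl⟩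
      · have h0 : ∀ j : Fin n, ((0 : Fin (n+1)) = Fin.succ j) = False := by
          intro j; simp [(Fin.succ_ne_zero j).symm]
        simp [h0]
      · simp only [Fin.succ_inj, ite_mul, one_mul, zero_mul]
        rw [Finset.sum_ite_eq]
        simp
    have hS : d ∣ ∑ j : Fin n, polyEval (MvPolynomial.pderiv j.succ p) τ * (σ j - τ j) :=
      Finset.dvd_sum fun j _ => (h j).mul_left _
    have hP : d ∣ polyEval p σ - polyEval p τ := polyEval_congr p h
    -- abbreviations
    set Pσ := polyEval p σ with hPσ
    set Pτ := polyEval p τ with hPτ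
    set vσ := (Fin.cons PowerSeries.X σ : Fin (n+1) → PowerSeries K) i with hvσ
    set vτ := (Fin.cons PowerSeries.X τ : Fin (n+1) → PowerSeries K) i with hvτ
    set S := ∑ j : Fin n, polyEval (MvPolynomial.pderiv j.succ p) τ * (σ j - τ j) with hSdef
    have key : polyEval (p * MvPolynomial.X i) σ - polyEval (p * MvPolynomial.X i) τ -
        ∑ j : Fin n, polyEval (MvPolynomial.pderiv j.succ (p * MvPolynomial.X i)) τ * (σ j - τ j)
        = (Pσ - Pτ - S) * vσ + S * (vσ - vτ) := by
      have hsum : ∑ j : Fin n,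
          polyEval (MvPolynomial.pderiv j.succ (p * MvPolynomial.X i)) τ * (σ j - τ j)
          = S * vτ + Pτ * (vσ - vτ) := by
        have e1 : ∀ j : Fin n,
            polyEval (MvPolynomial.pderiv j.succ (p * MvPolynomial.X i)) τ * (σ j - τ j)
            = (polyEval (MvPolynomial.pderiv j.succ p) τ * (σ j - τ j)) * vτ
              + Pτ * ((if i = Fin.succ j then (1 : PowerSeries K) else 0) * (σ j - τ j)) := by
          intro j
          rw [MvPolynomial.pderiv_mul, MvPolynomial.pderiv_X, Pi.single_apply]
          simp only [polyEval, map_add, map_mul, MvPolynomial.aeval_X,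
            apply_ite (MvPolynomial.aeval (Fin.cons PowerSeries.X τ)), map_one, map_zero]
          simp only [hPτ, hvτ, polyEval]
          ring
        rw [Finset.sum_congr rfl fun j _ => e1 j, Finset.sum_add_distrib, ← Finset.sum_mul,
          ← Finset.mul_sum, hw, ← hSdef]
      have eσ : polyEval (p * MvPolynomial.X i) σ = Pσ * vσ := by
        simp only [polyEval, map_mul, MvPolynomial.aeval_X, hPσ, hvσ]
      have eτ : polyEval (p * MvPolynomial.X i) τ = Pτ * vτ := by
        simp only [polyEval, map_mul, MvPolynomial.aeval_X, hPτ, hvτ]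
      rw [hsum, eσ, eτ]
      ring
    rw [key]
    refine dvd_add (hp.mul_right _) ?_
    rw [pow_two]
    exact mul_dvd_mul hS hv

lemma constantCoeff_polyEval (p : MvPolynomial (Fin (n + 1)) K) (σ : Fin n → PowerSeries K) :
    PowerSeries.constantCoeff (polyEval p σ) =
      MvPolynomial.eval (Fin.cons 0 fun j => PowerSeries.constantCoeff (σ j)) p := by
  rw [polyEval, MvPolynomial.aeval_def,
    MvPolynomial.eval₂_comp_left (PowerSeries.constantCoeff (R := K))]
  have h1 : (PowerSeries.constantCoeff).comp (algebraMap K (PowerSeries K)) =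
      RingHom.id K := by
    ext r; simp [PowerSeries.algebraMap_apply]
  have h2 : (PowerSeries.constantCoeff) ∘ (Fin.cons PowerSeries.X σ) =
      Fin.cons 0 fun j => PowerSeries.constantCoeff (σ j) := by
    rw [Fin.comp_cons]
    simp only [PowerSeries.constantCoeff_X]
    rfl
  rw [h1, h2, MvPolynomial.eval₂_id]

/-- The successive approximations to the solution. -/
noncomputable def ifsApprox (E : Fin n → MvPolynomial (Fin (n + 1)) K)
    (Ji : Matrix (Fin n) (Fin n) K) (r0 : Fin n → K) : ℕ → Fin n → PowerSeries K
  | 0 => fun j => PowerSeries.C (r0 j)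
  | (k + 1) => fun j => ifsApprox E Ji r0 k j +
      PowerSeries.C (-∑ i', Ji j i' *
        PowerSeries.coeff (k + 1) (polyEval (E i') (ifsApprox E Ji r0 k))) *
      PowerSeries.X ^ (k + 1)

end Aux

/-- Implicit Function Theorem for streams. -/
theorem stream_implicit_function_theorem {K : Type*} [Field K] [CharZero K] {n : ℕ}
    (E : Fin n → MvPolynomial (Fin (n + 1)) K) (r0 : Fin n → K)
    (hE : ∀ i, MvPolynomial.eval (Fin.cons 0 r0) (E i) = 0)
    (hJ : IsUnit (Matrix.of fun i j : Fin n =>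
      MvPolynomial.eval (Fin.cons 0 r0) (MvPolynomial.pderiv j.succ (E i)))) :
    ∃! σ : Fin n → PowerSeries K,
      (∀ i, PowerSeries.coeff 0 (σ i) = r0 i) ∧ (∀ i, polyEval (E i) σ = 0) := by
  classical
  set J : Matrix (Fin n) (Fin n) K := Matrix.of fun i j : Fin n =>
    MvPolynomial.eval (Fin.cons 0 r0) (MvPolynomial.pderiv j.succ (E i)) with hJdef
  set Ji : Matrix (Fin n) (Fin n) K := ↑hJ.unit⁻¹ with hJidef
  have hJJi : J * Ji = 1 := by
    have h := hJ.unit.mul_inv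
    rwa [hJ.unit_spec] at h
  have hJiJ : Ji * J = 1 := by
    have h := hJ.unit.inv_mul
    rwa [hJ.unit_spec] at h
  -- solving the linear system
  have hsolve : ∀ c : Fin n → K, (∀ i, ∑ j, J i j * c j = 0) → ∀ j, c j = 0 := by
    intro c hc j
    calc c j = ∑ i', (if j = i' then (1 : K) else 0) * c i' := by simp
      _ = ∑ i', (Ji * J) j i' * c i' := by
          refine Finset.sum_congr rfl fun i' _ => ?_
          rw [hJiJ, Matrix.one_apply]
      _ = ∑ i', (∑ l, Ji j l * J l i') * c i' := by
          refine Finset.sum_congr rfl fun i' _ => ?_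
          rw [Matrix.mul_apply]
      _ = ∑ l, Ji j l * (∑ i', J l i' * c i') := by
          simp only [Finset.sum_mul]
          rw [Finset.sum_comm]
          refine Finset.sum_congr rfl fun l _ => ?_
          rw [Finset.mul_sum]
          exact Finset.sum_congr rfl fun i' _ => by ring
      _ = 0 := by simp [hc]
  set A : ℕ → Fin n → PowerSeries K := ifsApprox E Ji r0 with hA
  -- successive approximations agree on low coefficients
  have hstep : ∀ k j, PowerSeries.X ^ (k + 1) ∣ A (k + 1) j - A k j := by
    intro k j
    show PowerSeries.X ^ (k+1) ∣ (A k j + _ * PowerSeries.X ^ (k+1)) - A k j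
    rw [add_sub_cancel_left]
    exact Dvd.intro_left _ rfl
  have hstab : ∀ k l, k ≤ l → ∀ j, PowerSeries.X ^ (k + 1) ∣ A l j - A k j := by
    intro k l hkl
    induction l with
    | zero => intro j; obtain rfl : k = 0 := Nat.le_zero.mp hkl; simp
    | succ l ih =>
      intro j
      rcases Nat.lt_or_ge k (l + 1) with hlt | hge
      · have hkle : k ≤ l := Nat.lt_succ_iff.mp hlt
        have h1 := ih hkle j
        have h2 : PowerSeries.X ^ (k + 1) ∣ A (l + 1) j - A l j :=
          (pow_dvd_pow _ (by omega)).trans (hstep l j)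
        have : A (l + 1) j - A k j = (A (l + 1) j - A l j) + (A l j - A k j) := by ring
        rw [this]; exact dvd_add h2 h1
      · obtain rfl : k = l + 1 := le_antisymm hkl hge
        simp
  -- constant coefficients stay r0
  have h0 : ∀ k j, PowerSeries.constantCoeff (A k j) = r0 j := by
    intro k
    induction k with
    | zero => intro j; simp [hA, ifsApprox]
    | succ k ih =>
      intro j
      show PowerSeries.constantCoeff (A k j + _ * PowerSeries.X ^ (k+1)) = r0 j
      rw [map_add, map_mul, map_pow, PowerSeries.constantCoeff_X]
      simp [ih j]
  -- the Jacobian entries as constant coefficients along the approximations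
  have hJc : ∀ k (i j : Fin n),
      PowerSeries.constantCoeff (polyEval (MvPolynomial.pderiv j.succ (E i)) (A k)) = J i j := by
    intro k i j
    rw [constantCoeff_polyEval]
    have : (fun j' => PowerSeries.constantCoeff (A k j')) = r0 := funext fun j' => h0 k j'
    rw [this, hJdef]
    rfl
  -- main induction: A k solves E up to order k
  have hmain : ∀ k i, PowerSeries.X ^ (k + 1) ∣ polyEval (E i) (A k) := by
    intro k
    induction k with
    | zero =>
      intro i
      rw [pow_one, PowerSeries.X_dvd_iff, constantCoeff_polyEval]
      have : (fun j' => PowerSeries.constantCoeff (A 0 j')) = r0 := funext fun j' => h0 0 j'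
      rw [this]; exact hE i
    | succ k ih =>
      intro i
      have hdiff : ∀ j, PowerSeries.X ^ (k + 1) ∣ A (k + 1) j - A k j := hstep k
      have htay := polyEval_taylor (E i) hdiff
      set S := ∑ j : Fin n, polyEval (MvPolynomial.pderiv j.succ (E i)) (A k) *
        (A (k + 1) j - A k j) with hSdef
      have hR : PowerSeries.X ^ (k + 2) ∣
          polyEval (E i) (A (k + 1)) - polyEval (E i) (A k) - S := by
        refine dvd_trans ?_ htay
        rw [← pow_mul]
        exact pow_dvd_pow _ (by omega)
      -- the (k+1)-st coefficient of each summand of S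
      have hc0 : ∀ j, A (k + 1) j - A k j =
          PowerSeries.C (-∑ i', Ji j i' *
            PowerSeries.coeff (k + 1) (polyEval (E i') (A k))) * PowerSeries.X ^ (k + 1) := by
        intro j
        show (A k j + _ * PowerSeries.X ^ (k+1)) - A k j = _
        rw [add_sub_cancel_left]
      have hScoeff : PowerSeries.coeff (k + 1) S =
          ∑ j, J i j * (-∑ i', Ji j i' *
            PowerSeries.coeff (k + 1) (polyEval (E i') (A k))) := by
        rw [hSdef, map_sum]
        refine Finset.sum_congr rfl fun j _ => ?_
        rw [hc0 j, ← mul_assoc]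
        have hcm := PowerSeries.coeff_mul_X_pow
          (polyEval (MvPolynomial.pderiv j.succ (E i)) (A k) *
            PowerSeries.C (-∑ i', Ji j i' *
              PowerSeries.coeff (k + 1) (polyEval (E i') (A k)))) (k + 1) 0
        rw [zero_add] at hcm
        rw [hcm, PowerSeries.coeff_zero_eq_constantCoeff, map_mul,
          PowerSeries.constantCoeff_C, hJc k i j]
      have hkey : PowerSeries.coeff (k + 1) (polyEval (E i) (A k) + S) = 0 := by
        rw [map_add, hScoeff]
        set b : Fin n → K := fun i' => PowerSeries.coeff (k + 1) (polyEval (E i') (A k))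
          with hb
        have e2 : ∀ i', ∑ j, J i j * Ji j i' = (1 : Matrix (Fin n) (Fin n) K) i i' := by
          intro i'; rw [← hJJi, Matrix.mul_apply]
        have : ∑ j, J i j * (-∑ i', Ji j i' * b i') = -b i := by
          calc ∑ j, J i j * (-∑ i', Ji j i' * b i')
              = -∑ j, ∑ i', J i j * (Ji j i' * b i') := by
                rw [← Finset.sum_neg_distrib]
                exact Finset.sum_congr rfl fun j _ => by rw [mul_neg, Finset.mul_sum]
            _ = -∑ i', ∑ j, J i j * (Ji j i' * b i') := by rw [Finset.sum_comm]
            _ = -∑ i', (∑ j, J i j * Ji j i') * b i' := by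
                refine congrArg Neg.neg (Finset.sum_congr rfl fun i' _ => ?_)
                rw [Finset.sum_mul]
                exact Finset.sum_congr rfl fun j _ => by ring
            _ = -∑ i', (1 : Matrix (Fin n) (Fin n) K) i i' * b i' := by
                exact congrArg Neg.neg (Finset.sum_congr rfl fun i' _ => by rw [e2 i'])
            _ = -b i := by simp [Matrix.one_apply]
        rw [this]
        simp [hb]
      have hfirst : PowerSeries.X ^ (k + 2) ∣ polyEval (E i) (A k) + S := by
        rw [PowerSeries.X_pow_dvd_iff]
        intro m hm
        rcases Nat.lt_or_ge m (k + 1) with hm1 | hm1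
        · rw [map_add]
          have hS1 : PowerSeries.X ^ (k + 1) ∣ S :=
            Finset.dvd_sum fun j _ => (hdiff j).mul_left _
          have ih' := PowerSeries.X_pow_dvd_iff.mp (ih i)
          have hS1' := PowerSeries.X_pow_dvd_iff.mp hS1
          rw [ih' m hm1, hS1' m hm1, add_zero]
        · obtain rfl : m = k + 1 := by omega
          exact hkey
      have : polyEval (E i) (A (k + 1)) =
          (polyEval (E i) (A k) + S) + (polyEval (E i) (A (k + 1)) - polyEval (E i) (A k) - S) := by
        ring
      rw [this]
      exact dvd_add hfirst hR
  -- the solution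
  set σ : Fin n → PowerSeries K := fun j => PowerSeries.mk fun m =>
    PowerSeries.coeff m (A m j) with hσ
  have hσA : ∀ k j, PowerSeries.X ^ (k + 1) ∣ σ j - A k j := by
    intro k j
    rw [PowerSeries.X_pow_dvd_iff]
    intro m hm
    rw [map_sub, hσ]
    simp only [PowerSeries.coeff_mk]
    have h1 := hstab m k (by omega) j
    rw [PowerSeries.X_pow_dvd_iff] at h1
    have h2 : PowerSeries.coeff m (A k j) = PowerSeries.coeff m (A m j) := by
      have := h1 m (Nat.lt_succ_self m)
      rw [map_sub, sub_eq_zero] at this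
      exact this
    rw [h2, sub_self]
  have hσ0 : ∀ j, PowerSeries.coeff 0 (σ j) = r0 j := by
    intro j
    rw [hσ]
    simp only [PowerSeries.coeff_mk]
    rw [PowerSeries.coeff_zero_eq_constantCoeff]
    exact h0 0 j
  have hσE : ∀ i, polyEval (E i) σ = 0 := by
    intro i
    ext m
    rw [map_zero]
    have hdvd : PowerSeries.X ^ (m + 1) ∣ polyEval (E i) σ := by
      have h1 : PowerSeries.X ^ (m + 1) ∣ polyEval (E i) σ - polyEval (E i) (A m) :=
        polyEval_congr (E i) fun j => hσA m j
      have h2 := hmain m i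
      have : polyEval (E i) σ = (polyEval (E i) σ - polyEval (E i) (A m)) +
          polyEval (E i) (A m) := by ring
      rw [this]
      exact dvd_add h1 h2
    rw [PowerSeries.X_pow_dvd_iff] at hdvd
    exact hdvd m (Nat.lt_succ_self m)
  refine ⟨σ, ⟨hσ0, hσE⟩, ?_⟩
  -- uniqueness
  rintro τ ⟨hτ0, hτE⟩
  have huniq : ∀ k j, PowerSeries.X ^ k ∣ τ j - σ j := by
    intro k
    induction k with
    | zero => intro j; simp
    | succ k ih =>
      intro j
      rw [PowerSeries.X_pow_dvd_iff]
      intro m hm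
      rcases Nat.lt_or_ge m k with hm1 | hm1
      · have := ih j
        rw [PowerSeries.X_pow_dvd_iff] at this
        exact this m hm1
      have hmk : k = m := by omega
      subst hmk
      -- show the k-th coefficient of the difference vanishes
      rcases Nat.eq_zero_or_pos k with rfl | hk
      · rw [map_sub, hτ0 j, hσ0 j, sub_self]
      -- k ≥ 1 : use the Taylor expansion
      have hdelta : ∀ j', PowerSeries.X ^ k ∣ τ j' - σ j' := ih
      choose hfun hh using fun j' => hdelta j'
      have hcoeffk : ∀ j', PowerSeries.coeff k (τ j' - σ j') =
          PowerSeries.constantCoeff (hfun j') := by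
        intro j'
        rw [hh j', mul_comm]
        have hcm := PowerSeries.coeff_mul_X_pow (hfun j') k 0
        rw [zero_add] at hcm
        rw [hcm, PowerSeries.coeff_zero_eq_constantCoeff]
      have hJσ : ∀ (i' j' : Fin n),
          PowerSeries.constantCoeff (polyEval (MvPolynomial.pderiv j'.succ (E i')) σ)
            = J i' j' := by
        intro i' j'
        rw [constantCoeff_polyEval]
        have : (fun j'' => PowerSeries.constantCoeff (σ j'')) = r0 := by
          funext j''
          rw [← PowerSeries.coeff_zero_eq_constantCoeff]
          exact hσ0 j''
        rw [this, hJdef]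
        rfl
      have hsys : ∀ i, ∑ j', J i j' * PowerSeries.constantCoeff (hfun j') = 0 := by
        intro i
        have htay := polyEval_taylor (E i) hdelta
        rw [hτE i, hσE i, sub_zero, zero_sub] at htay
        have h2k : PowerSeries.X ^ (k + 1) ∣
            ∑ j' : Fin n, polyEval (MvPolynomial.pderiv j'.succ (E i)) σ * (τ j' - σ j') := by
          have h1 : (PowerSeries.X : PowerSeries K) ^ (k + 1) ∣
              ((PowerSeries.X : PowerSeries K) ^ k) ^ 2 := by
            rw [← pow_mul]
            exact pow_dvd_pow _ (by omega)
          exact h1.trans (dvd_neg.mp htay)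
        have hc := (PowerSeries.X_pow_dvd_iff.mp h2k) k (Nat.lt_succ_self k)
        rw [map_sum] at hc
        rw [← hc]
        refine Finset.sum_congr rfl fun j' _ => ?_
        rw [hh j', mul_comm (PowerSeries.X ^ k) (hfun j'), ← mul_assoc]
        have hcm := PowerSeries.coeff_mul_X_pow
          (polyEval (MvPolynomial.pderiv j'.succ (E i)) σ * hfun j') k 0
        rw [zero_add] at hcm
        rw [hcm, PowerSeries.coeff_zero_eq_constantCoeff, map_mul, hJσ i j']
      have hzero := hsolve (fun j' => PowerSeries.constantCoeff (hfun j')) hsys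
      rw [map_sub, ← map_sub, hcoeffk j]
      exact hzero j
  have : τ = σ := by
    funext j
    ext m
    have := huniq (m + 1) j
    rw [PowerSeries.X_pow_dvd_iff] at this
    have h := this m (Nat.lt_succ_self m)
    rw [map_sub, sub_eq_zero] at h
    exact h
  exact this
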